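/- Let φ : R → S be a ring homomorphism making S a finitely presented right R-module, and let X be a pure injective left R-module. Then S ⊗_R X is a pure injective left S-module. -/

import Mathlib

universe v

/-- A monomorphism of `R`-modules is pure if tensoring with any module preserves
injectivity. -/
def IsPureMono {R : Type*} [CommRing R] {L M : Type*}
    [AddCommGroup L] [Module R L] [AddCommGroup M] [Module R M]
    (f : L →ₗ[R] M) : Prop :=
  Function.Injective f ∧
    ∀ (X : Type*) [AddCommGroup X] [Module R X],
      Function.Injective (LinearMap.lTensor X f)

/-- A module `M` is pure injective if `Hom(-, M)` sends pure monomorphisms to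
surjections, i.e. every map to `M` extends along any pure monomorphism. -/
def IsPureInjective (R : Type*) [CommRing R] (M : Type v) [AddCommGroup M]
    [Module R M] : Prop :=
  ∀ ⦃L N : Type v⦄ [AddCommGroup L] [Module R L] [AddCommGroup N] [Module R N]
    (f : L →ₗ[R] N), IsPureMono.{_, v, v, v} f →
      ∀ g : L →ₗ[R] M, ∃ h : N →ₗ[R] M, h.comp f = g

open TensorProduct CharacterModule LinearMap 

set_option synthInstance.maxHeartbeats 1000000
set_option maxHeartbeats 1000000

section Theta

universe u u' w

variable {R : Type u} [CommRing R]

/-- The evaluation map from a module into its double character dual. -/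
@[simps] def evalCh (A : Type u') [AddCommGroup A] [Module R A] :
    A →ₗ[R] CharacterModule (CharacterModule A) where
  toFun a :=
    { toFun := fun c => c a
      map_zero' := rfl
      map_add' := fun c c' => rfl }
  map_add' a b := by ext c; exact c.map_add a b
  map_smul' r a := by ext c; rfl

lemma evalCh_injective (A : Type u') [AddCommGroup A] [Module R A] :
    Function.Injective (evalCh (R := R) A) := by
  intro a b hab
  have h : ∀ c : CharacterModule A, c (a - b) = 0 := by
    intro c
    have h2 : c a = c b := congrArg (fun ψ => ψ c) hab
    rw [map_sub, h2, sub_self]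
  have h3 := CharacterModule.eq_zero_of_character_apply h
  rw [← sub_eq_zero]
  exact h3

variable (X : Type u') [AddCommGroup X] [Module R X]

/-- The natural map `V ⊗ X** → (V ⊗ X)**`. -/
noncomputable def theta (V : Type w) [AddCommGroup V] [Module R V] :
    V ⊗[R] CharacterModule (CharacterModule X) →ₗ[R]
      CharacterModule (CharacterModule (V ⊗[R] X)) :=
  TensorProduct.lift
  { toFun := fun v => dual (dual (TensorProduct.mk R V X v))
    map_add' := fun v v' => by
      refine LinearMap.ext fun g => DFunLike.ext _ _ fun φ => ?_
      have h : dual (TensorProduct.mk R V X (v + v')) φ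
          = dual (TensorProduct.mk R V X v) φ + dual (TensorProduct.mk R V X v') φ := by
        refine DFunLike.ext _ _ fun x => ?_
        show φ ((v + v') ⊗ₜ[R] x) = φ (v ⊗ₜ[R] x) + φ (v' ⊗ₜ[R] x)
        rw [TensorProduct.add_tmul, map_add]
      show g (dual (TensorProduct.mk R V X (v + v')) φ) = _
      rw [h, map_add]
      rfl
    map_smul' := fun r v => by
      refine LinearMap.ext fun g => DFunLike.ext _ _ fun φ => ?_
      have h : dual (TensorProduct.mk R V X (r • v)) φ
          = dual (TensorProduct.mk R V X v) (r • φ) := by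
        refine DFunLike.ext _ _ fun x => ?_
        show φ ((r • v) ⊗ₜ[R] x) = φ (r • (v ⊗ₜ[R] x))
        rw [TensorProduct.smul_tmul']
      show g (dual (TensorProduct.mk R V X (r • v)) φ) = _
      rw [h]
      rfl }

@[simp] lemma theta_tmul (V : Type w) [AddCommGroup V] [Module R V]
    (v : V) (g : CharacterModule (CharacterModule X))
    (φ : CharacterModule (V ⊗[R] X)) :
    theta X V (v ⊗ₜ[R] g) φ = g (dual (TensorProduct.mk R V X v) φ) := rfl

lemma theta_natural {V : Type w} {V' : Type w} [AddCommGroup V] [Module R V]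
    [AddCommGroup V'] [Module R V'] (j : V →ₗ[R] V')
    (t : V ⊗[R] CharacterModule (CharacterModule X)) :
    theta X V' (j.rTensor _ t) = dual (dual (j.rTensor X)) (theta X V t) := by
  induction t using TensorProduct.induction_on with
  | zero => simp; rfl
  | tmul v g =>
    refine DFunLike.ext _ _ fun φ => ?_
    rw [rTensor_tmul, theta_tmul]
    show _ = theta X V (v ⊗ₜ[R] g) (dual (j.rTensor X) φ)
    rw [theta_tmul]
    congr 1
  | add a b ha hb =>
    rw [map_add, map_add, ha, hb, map_add, map_add]

section Free

variable {n : ℕ}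

/-- Projection `(Rⁿ) ⊗ W → W` onto the `i`-th coordinate. -/
noncomputable def rhoMap (W : Type w) [AddCommGroup W] [Module R W] (i : Fin n) :
    (Fin n → R) ⊗[R] W →ₗ[R] W :=
  TensorProduct.lift ((LinearMap.lsmul R W).comp (LinearMap.proj i))

@[simp] lemma rhoMap_tmul (W : Type w) [AddCommGroup W] [Module R W] (i : Fin n)
    (v : Fin n → R) (x : W) : rhoMap W i (v ⊗ₜ[R] x) = v i • x := rfl

/-- Inclusion `W → (Rⁿ) ⊗ W` into the `i`-th coordinate. -/
noncomputable def sigmaMap (W : Type w) [AddCommGroup W] [Module R W] (i : Fin n) :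
    W →ₗ[R] (Fin n → R) ⊗[R] W :=
  TensorProduct.mk R (Fin n → R) W (Pi.single i 1)

@[simp] lemma sigmaMap_apply (W : Type w) [AddCommGroup W] [Module R W] (i : Fin n)
    (x : W) : sigmaMap W i x = (Pi.single i 1 : Fin n → R) ⊗ₜ[R] x := rfl

lemma sum_sigma_rho (W : Type w) [AddCommGroup W] [Module R W] :
    ∑ i : Fin n, (sigmaMap (R := R) W i).comp (rhoMap W i) = LinearMap.id := by
  classical
  apply TensorProduct.ext'
  intro v x
  rw [LinearMap.sum_apply]
  have h1 : ∀ i : Fin n, ((sigmaMap (R := R) W i).comp (rhoMap W i)) (v ⊗ₜ[R] x)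
      = (v i • (Pi.single i 1 : Fin n → R)) ⊗ₜ[R] x := by
    intro i
    simp only [LinearMap.comp_apply, rhoMap_tmul, sigmaMap_apply]
    rw [TensorProduct.tmul_smul, TensorProduct.smul_tmul']
  rw [Finset.sum_congr rfl fun i _ => h1 i, ← TensorProduct.sum_tmul]
  congr 1
  ext j
  simp [Pi.single_apply, Finset.sum_ite_eq']

lemma charSum_apply {A : Type*} [AddCommGroup A] {ι : Type*} (s : Finset ι)
    (f : ι → CharacterModule A) (a : A) : (∑ i ∈ s, f i) a = ∑ i ∈ s, f i a := by
  classical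
  induction s using Finset.induction_on with
  | empty => rfl
  | insert _ _ hnot ih => rw [Finset.sum_insert hnot, Finset.sum_insert hnot, ← ih]; rfl

lemma theta_free_surjective :
    Function.Surjective (theta (R := R) X (Fin n → R)) := by
  classical
  intro Ψ
  refine ⟨∑ i : Fin n,
    (Pi.single i 1 : Fin n → R) ⊗ₜ[R] (dual (dual (rhoMap (R := R) X i)) Ψ), ?_⟩
  rw [map_sum]
  refine DFunLike.ext _ _ fun φ => ?_
  rw [charSum_apply]
  have hterm : ∀ i : Fin n,
      theta (R := R) X (Fin n → R) ((Pi.single i 1 : Fin n → R) ⊗ₜ[R]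
        (dual (dual (rhoMap (R := R) X i)) Ψ)) φ
      = Ψ (φ.comp (((sigmaMap (R := R) X i).comp (rhoMap X i)).toAddMonoidHom)) := by
    intro i
    rw [theta_tmul]
    rfl
  rw [Finset.sum_congr rfl fun i _ => hterm i]
  refine (map_sum Ψ _ _).symm.trans ?_
  congr 1
  refine DFunLike.ext _ _ fun z => ?_
  refine (charSum_apply _ _ z).trans ?_
  have : ∀ i : Fin n,
      (φ.comp (((sigmaMap (R := R) X i).comp (rhoMap X i)).toAddMonoidHom)) z
      = φ (((sigmaMap (R := R) X i).comp (rhoMap X i)) z) := fun i => rfl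
  refine (Finset.sum_congr rfl fun i _ => this i).trans ?_
  rw [← map_sum]
  congr 1
  have h0 := congrArg (fun T : _ →ₗ[R] _ => T z) (sum_sigma_rho (R := R) (n := n) X)
  simp only [LinearMap.sum_apply, LinearMap.id_apply] at h0
  exact h0

lemma theta_free_injective :
    Function.Injective (theta (R := R) X (Fin n → R)) := by
  classical
  have H : ∀ t, theta (R := R) X (Fin n → R) t = 0 → t = 0 := by
    intro t ht
    have hrep : t = ∑ i : Fin n,
        sigmaMap (CharacterModule (CharacterModule X)) i
          (rhoMap (CharacterModule (CharacterModule X)) i t) := by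
      have h0 := congrArg (fun T : _ →ₗ[R] _ => T t)
        (sum_sigma_rho (R := R) (n := n) (CharacterModule (CharacterModule X)))
      simp only [LinearMap.sum_apply, LinearMap.comp_apply, LinearMap.id_apply] at h0
      exact h0.symm
    have key : ∀ i : Fin n,
        rhoMap (CharacterModule (CharacterModule X)) i t = 0 := by
      intro i
      refine DFunLike.ext _ _ fun ψ => ?_
      have h2 : theta (R := R) X (Fin n → R) t (dual (rhoMap X i) ψ) = 0 := by rw [ht]; rfl
      rw [hrep, map_sum, charSum_apply] at h2
      have hterm : ∀ j : Fin n,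
          theta (R := R) X (Fin n → R)
            (sigmaMap (CharacterModule (CharacterModule X)) j
              (rhoMap (CharacterModule (CharacterModule X)) j t))
            (dual (rhoMap X i) ψ)
          = rhoMap (CharacterModule (CharacterModule X)) j t
              (ψ.comp (((rhoMap X i).comp (sigmaMap (R := R) X j)).toAddMonoidHom)) := by
        intro j
        rw [sigmaMap_apply, theta_tmul]
        rfl
      rw [Finset.sum_congr rfl fun j _ => hterm j] at h2
      have hcomp0 : ∀ j : Fin n, j ≠ i →
          ((rhoMap X i).comp (sigmaMap (R := R) X j)) = 0 := by
        intro j hj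
        refine LinearMap.ext fun x => ?_
        simp only [LinearMap.comp_apply, sigmaMap_apply, rhoMap_tmul, LinearMap.zero_apply]
        rw [Pi.single_eq_of_ne (Ne.symm hj), zero_smul]
      have hcompi : ((rhoMap X i).comp (sigmaMap (R := R) X i)) = LinearMap.id := by
        refine LinearMap.ext fun x => ?_
        simp only [LinearMap.comp_apply, sigmaMap_apply, rhoMap_tmul, LinearMap.id_apply]
        rw [Pi.single_eq_same, one_smul]
      rw [Finset.sum_eq_single i] at h2
      · rw [hcompi] at h2
        exact h2
      · intro j _ hj
        rw [hcomp0 j hj]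
        have hz : (AddMonoidHom.comp ψ ((0 : X →ₗ[R] X).toAddMonoidHom))
            = (0 : CharacterModule X) := by
          refine DFunLike.ext _ _ fun x => ?_
          show ψ 0 = 0
          exact map_zero ψ
        rw [hz]
        exact map_zero _
      · intro hmem
        exact absurd (Finset.mem_univ i) hmem
    rw [hrep]
    refine Finset.sum_eq_zero fun i _ => ?_
    rw [key i, map_zero]
  intro t t' h
  have := H (t - t') (by rw [map_sub, h, sub_self])
  exact sub_eq_zero.mp this

end Free

section Exactness

lemma dual_injective_of_surjective {A B : Type*} [AddCommGroup A] [Module R A]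
    [AddCommGroup B] [Module R B] (f : A →ₗ[R] B) (hf : Function.Surjective f) :
    Function.Injective (dual (R := R) f) := by
  intro φ φ' h
  refine DFunLike.ext _ _ fun b => ?_
  obtain ⟨a, rfl⟩ := hf b
  exact DFunLike.congr_fun h a

lemma exact_dual {A B C' : Type*} [AddCommGroup A] [Module R A] [AddCommGroup B] [Module R B]
    [AddCommGroup C'] [Module R C'] (u : A →ₗ[R] B) (v : B →ₗ[R] C')
    (h : Function.Exact u v) : Function.Exact (dual (R := R) v) (dual u) := by
  intro φ
  constructor
  · intro hφ
    let vZ : B →ₗ[ℤ] C' := v.toAddMonoidHom.toIntLinearMap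
    let φZ : B →ₗ[ℤ] AddCircle (1 : ℚ) := φ.toIntLinearMap
    have hsub : LinearMap.ker vZ ≤ LinearMap.ker φZ := by
      intro b hb
      have hb' : v b = 0 := hb
      obtain ⟨a, rfl⟩ := (h b).mp hb'
      have h5 : (dual u φ) a = 0 := by rw [hφ]; rfl
      exact h5
    let φbar := Submodule.liftQ (LinearMap.ker vZ) φZ hsub
    let e := vZ.quotKerEquivRange
    let ψ0 : LinearMap.range vZ →ₗ[ℤ] AddCircle (1 : ℚ) := φbar ∘ₗ e.symm.toLinearMap
    obtain ⟨χ, hχ⟩ := dual_surjective_of_injective (R := ℤ)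
      ((LinearMap.range vZ).subtype) (Submodule.injective_subtype _) ψ0.toAddMonoidHom
    refine ⟨χ, ?_⟩
    refine DFunLike.ext _ _ fun b => ?_
    have hmem : vZ b ∈ LinearMap.range vZ := ⟨b, rfl⟩
    have h2 : (dual (R := R) v χ) b = ψ0 ⟨vZ b, hmem⟩ :=
      DFunLike.congr_fun hχ (⟨vZ b, hmem⟩ : LinearMap.range vZ)
    have h3 : e (Submodule.Quotient.mk b) = ⟨vZ b, hmem⟩ :=
      Subtype.ext (vZ.quotKerEquivRange_apply_mk b)
    have h4 : ψ0 ⟨vZ b, hmem⟩ = φbar (Submodule.Quotient.mk b) := by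
      show φbar (e.symm ⟨vZ b, hmem⟩) = _
      rw [← h3, LinearEquiv.symm_apply_apply]
    rw [h2, h4]
    rfl
  · rintro ⟨ψ, rfl⟩
    refine DFunLike.ext _ _ fun a => ?_
    show ψ (v (u a)) = 0
    rw [h.apply_apply_eq_zero a, map_zero]

end Exactness

lemma theta_fp_bijective (V : Type u) [AddCommGroup V] [Module R V]
    [Module.FinitePresentation R V] :
    Function.Bijective (theta (R := R) X V) := by
  classical
  obtain ⟨n, p, hp⟩ := Module.Finite.exists_fin' R V
  have hker : (LinearMap.ker p).FG := Module.FinitePresentation.fg_ker p hp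
  obtain ⟨m, sgen, hsgen⟩ := Submodule.fg_iff_exists_fin_generating_family.mp hker
  let q : (Fin m → R) →ₗ[R] (Fin n → R) := Fintype.linearCombination R sgen
  have hqp : Function.Exact q p := by
    rw [LinearMap.exact_iff, Fintype.range_linearCombination]
    exact hsgen.symm
  have hex1 : Function.Exact (q.rTensor X) (p.rTensor X) := rTensor_exact X hqp hp
  have hex2 := exact_dual (R := R) _ _ hex1
  have hex3 := exact_dual (R := R) _ _ hex2
  constructor
  · -- injectivity
    have H0 : ∀ t, theta (R := R) X V t = 0 → t = 0 := by
      intro t ht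
      obtain ⟨t', rfl⟩ := LinearMap.rTensor_surjective
        (CharacterModule (CharacterModule X)) hp t
      have hnat := theta_natural (R := R) X p t'
      rw [ht] at hnat
      have hker2 : dual (dual (p.rTensor X)) (theta (R := R) X (Fin n → R) t') = 0 := hnat.symm
      obtain ⟨ξ, hξ⟩ := (hex3 _).mp hker2
      obtain ⟨s', hs'⟩ := (theta_free_surjective (R := R) (X := X) (n := m)) ξ
      have hnat2 := theta_natural (R := R) X q s'
      rw [hs', hξ] at hnat2
      have heq : q.rTensor (CharacterModule (CharacterModule X)) s' = t' :=
        theta_free_injective (R := R) (X := X) hnat2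
      rw [← heq, ← LinearMap.comp_apply, ← LinearMap.rTensor_comp]
      have hpq : p.comp q = 0 := by
        refine LinearMap.ext fun w => ?_
        have h6 : q w ∈ LinearMap.ker p := by
          rw [← hsgen]
          have h7 : q w = ∑ i, w i • sgen i := rfl
          rw [h7]
          exact Submodule.sum_mem _ fun i _ =>
            Submodule.smul_mem _ _ (Submodule.subset_span ⟨i, rfl⟩)
        exact h6
      rw [hpq, LinearMap.rTensor_zero, LinearMap.zero_apply]
    intro t t' h
    have := H0 (t - t') (by rw [map_sub, h, sub_self])
    exact sub_eq_zero.mp this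
  · -- surjectivity
    intro Ψ
    have hsurj1 : Function.Surjective (p.rTensor X) := LinearMap.rTensor_surjective X hp
    have hinj1 : Function.Injective (dual (R := R) (p.rTensor X)) :=
      _root_.dual_injective_of_surjective _ hsurj1
    obtain ⟨χ, hχ⟩ := dual_surjective_of_injective _ hinj1 Ψ
    obtain ⟨t', ht'⟩ := (theta_free_surjective (R := R) (X := X) (n := n)) χ
    refine ⟨p.rTensor _ t', ?_⟩
    rw [theta_natural (R := R) X p t', ht', hχ]

end Theta


section Assembly

open TensorProduct CharacterModule LinearMap

universe u u' w

lemma isPureMono_evalCh {R : Type u} [CommRing R] (X : Type u') [AddCommGroup X]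
    [Module R X] : IsPureMono.{u, u', u', w} (evalCh (R := R) X) := by
  constructor
  · exact evalCh_injective X
  · intro Y _ _
    have hcomp : (theta (R := R) X Y) ∘ₗ (LinearMap.lTensor Y (evalCh (R := R) X))
        = evalCh (R := R) (Y ⊗[R] X) := by
      apply TensorProduct.ext'
      intro y x
      refine DFunLike.ext _ _ fun φ => ?_
      show theta (R := R) X Y (y ⊗ₜ[R] (evalCh (R := R) X x)) φ = _
      rw [theta_tmul]
      rfl
    have hinj : Function.Injective
        ((theta (R := R) X Y) ∘ₗ (LinearMap.lTensor Y (evalCh (R := R) X))) := by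
      rw [hcomp]
      exact evalCh_injective (Y ⊗[R] X)
    exact fun a b hab => hinj (by simp only [LinearMap.comp_apply, hab])

lemma isPureInjective_characterModule (S : Type v) [CommRing S] (B : Type v)
    [AddCommGroup B] [Module S B] : IsPureInjective S (CharacterModule B) := by
  intro L N _ _ _ _ f hf g
  have hinj : Function.Injective (f.rTensor B) := by
    have h1 : Function.Injective (LinearMap.lTensor B f) := hf.2 B
    have h2 : f.rTensor B = (TensorProduct.comm S B N).toLinearMap ∘ₗ
        (LinearMap.lTensor B f) ∘ₗ (TensorProduct.comm S L B).toLinearMap := by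
      apply TensorProduct.ext'
      intro l b
      simp
    rw [h2]
    exact (TensorProduct.comm S B N).injective.comp
      (h1.comp (TensorProduct.comm S L B).injective)
  obtain ⟨k, hk⟩ := dual_surjective_of_injective (f.rTensor B) hinj (homEquiv g)
  refine ⟨homEquiv.symm k, ?_⟩
  refine LinearMap.ext fun x => ?_
  refine DFunLike.ext _ _ fun b => ?_
  exact DFunLike.congr_fun hk (x ⊗ₜ[S] b)

lemma isPureInjective_of_retract {S : Type v} [CommRing S] {M P : Type v}
    [AddCommGroup M] [Module S M] [AddCommGroup P] [Module S P]
    (hP : IsPureInjective S P) (i : M →ₗ[S] P) (pr : P →ₗ[S] M)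
    (hpi : pr.comp i = LinearMap.id) : IsPureInjective S M := by
  intro L N _ _ _ _ f hf g
  obtain ⟨h, hh⟩ := hP f hf (i.comp g)
  refine ⟨pr.comp h, ?_⟩
  rw [LinearMap.comp_assoc, hh, ← LinearMap.comp_assoc, hpi, LinearMap.id_comp]

end Assembly

/-- If `S` is an `R`-algebra which is finitely presented as an `R`-module
and `X` is a pure injective `R`-module, then `S ⊗[R] X` is a pure injective
`S`-module. -/
theorem pureInjective_baseChange
    {R S : Type v} [CommRing R] [CommRing S] [Algebra R S]
    [Module.FinitePresentation R S]
    (X : Type v) [AddCommGroup X] [Module R X] (hX : IsPureInjective R X) :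
    IsPureInjective S (TensorProduct R S X) := by
  classical
  obtain ⟨r, hr⟩ := hX (evalCh (R := R) X) (isPureMono_evalCh X) LinearMap.id
  have hpi : (r.baseChange S).comp ((evalCh (R := R) X).baseChange S) = LinearMap.id := by
    rw [← LinearMap.baseChange_comp, hr, LinearMap.baseChange_id]
  let Θ : (S ⊗[R] CharacterModule (CharacterModule X)) →ₗ[S]
      CharacterModule (CharacterModule (S ⊗[R] X)) :=
    { toFun := theta (R := R) X S
      map_add' := map_add _
      map_smul' := by
        intro s t
        simp only [RingHom.id_apply]
        induction t using TensorProduct.induction_on with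
        | zero => rw [smul_zero, map_zero, smul_zero]
        | tmul s' g =>
          refine DFunLike.ext _ _ fun φ => ?_
          rw [TensorProduct.smul_tmul', smul_eq_mul, theta_tmul]
          show _ = theta (R := R) X S (s' ⊗ₜ[R] g) (s • φ)
          rw [theta_tmul]
          congr 1
        | add a b ha hb => rw [smul_add, map_add, ha, hb, map_add, smul_add] }
  have hbij : Function.Bijective Θ := theta_fp_bijective (R := R) X S
  let e := LinearEquiv.ofBijective Θ hbij
  have h1 : IsPureInjective S (CharacterModule (CharacterModule (S ⊗[R] X))) :=
    isPureInjective_characterModule S (CharacterModule (S ⊗[R] X))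
  have h2 : IsPureInjective S (S ⊗[R] CharacterModule (CharacterModule X)) :=
    isPureInjective_of_retract h1 e.toLinearMap e.symm.toLinearMap
      (by
        refine LinearMap.ext fun t => ?_
        exact e.symm_apply_apply t)
  exact isPureInjective_of_retract h2 ((evalCh (R := R) X).baseChange S)
    (r.baseChange S) hpi
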